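/- arXiv:1608.07450 — 2 statements merged into one kernel-verified Lean document; each statement's English description precedes it below -/
import Mathlib

section
/- Let ω : ℝ → ℝ³ be continuous and K, L be 3×3 real matrices whose symmetric parts are positive definite with least eigenvalues σ_K, σ_L > 0. Consider the cascade system ė_v = e_v × ω + e_γ − K e_v, ė_γ = e_γ × ω − L e_γ. Then for any 0 < ε < 2·min(σ_K, σ_L), the function V(e_v, e_γ) = |e_γ|²/2 + (ε²/2)|e_v|² satisfies V̇ ≤ −(σ_L − ε/2)|e_γ|² − ε²(σ_K − ε/2)|e_v|² along solutions, so the origin is globally exponentially stable. -/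
open Matrix
open scoped Matrix

infixl:74 " ×₃ " => crossProduct

/-- Euclidean norm on `Fin 3 → ℝ`. -/
noncomputable def enorm3 (x : Fin 3 → ℝ) : ℝ := Real.sqrt (x ⬝ᵥ x)

private lemma dot_self_nonneg3 (x : Fin 3 → ℝ) : 0 ≤ x ⬝ᵥ x :=
  Finset.sum_nonneg fun i _ => mul_self_nonneg (x i)

private lemma quad_lower (S : Matrix (Fin 3) (Fin 3) ℝ) (hS : S.IsHermitian) (σ : ℝ)
    (hlb : ∀ μ, Module.End.HasEigenvalue (Matrix.toLin' S) μ → σ ≤ μ) (x : Fin 3 → ℝ) :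
    σ * (x ⬝ᵥ x) ≤ x ⬝ᵥ (S *ᵥ x) := by
  classical
  have heig : ∀ j, σ ≤ hS.eigenvalues j := by
    intro j
    apply hlb
    apply Module.End.hasEigenvalue_of_hasEigenvector (x := ⇑(hS.eigenvectorBasis j))
    constructor
    · rw [Module.End.mem_eigenspace_iff, Matrix.toLin'_apply, hS.mulVec_eigenvectorBasis]
    · intro h0
      apply hS.eigenvectorBasis.toBasis.ne_zero j
      rw [OrthonormalBasis.coe_toBasis]
      ext i
      exact congrFun h0 i
  set U : Matrix (Fin 3) (Fin 3) ℝ := (hS.eigenvectorUnitary : Matrix (Fin 3) (Fin 3) ℝ) with hU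
  have hstar : star U = Uᵀ := by
    ext i j
    simp [Matrix.star_apply]
  have hUUt : U * Uᵀ = 1 := by
    rw [← hstar]
    exact (Matrix.mem_unitaryGroup_iff).mp hS.eigenvectorUnitary.2
  set y : Fin 3 → ℝ := Uᵀ *ᵥ x with hy
  set μ : Fin 3 → ℝ := hS.eigenvalues with hμ
  have hD : Matrix.diagonal (RCLike.ofReal ∘ μ) = Matrix.diagonal μ := by simp
  have hsp : S = U * Matrix.diagonal μ * Uᵀ := by
    rw [← hD, ← hstar]; exact hS.spectral_theorem
  have dot1 : x ⬝ᵥ (S *ᵥ x) = ∑ i, μ i * (y i * y i) := by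
    rw [hsp, mul_assoc, ← Matrix.mulVec_mulVec, Matrix.dotProduct_mulVec,
        ← Matrix.mulVec_transpose, ← hy, ← Matrix.mulVec_mulVec, ← hy]
    simp only [dotProduct, Matrix.mulVec_diagonal]
    exact Finset.sum_congr rfl fun i _ => by ring
  have dot2 : x ⬝ᵥ x = y ⬝ᵥ y := by
    have : y ⬝ᵥ y = (U *ᵥ y) ⬝ᵥ x := by
      calc y ⬝ᵥ y = y ⬝ᵥ (Uᵀ *ᵥ x) := by rw [← hy]
        _ = (y ᵥ* Uᵀ) ⬝ᵥ x := Matrix.dotProduct_mulVec _ _ _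
        _ = (U *ᵥ y) ⬝ᵥ x := by rw [← Matrix.transpose_transpose U, Matrix.mulVec_transpose,
              Matrix.transpose_transpose]
    rw [this, hy, Matrix.mulVec_mulVec, hUUt, Matrix.one_mulVec]
  rw [dot1, dot2]
  have hσy : σ * (y ⬝ᵥ y) = ∑ i, σ * (y i * y i) := by
    simp [dotProduct, Finset.mul_sum]
  rw [hσy]
  exact Finset.sum_le_sum fun i _ => mul_le_mul_of_nonneg_right (heig i) (mul_self_nonneg _)

private lemma sym_quad (M : Matrix (Fin 3) (Fin 3) ℝ) (x : Fin 3 → ℝ) :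
    x ⬝ᵥ (((1 / 2 : ℝ) • (M + Mᵀ)) *ᵥ x) = x ⬝ᵥ (M *ᵥ x) := by
  have ht : x ⬝ᵥ (Mᵀ *ᵥ x) = x ⬝ᵥ (M *ᵥ x) := by
    rw [Matrix.mulVec_transpose, dotProduct_comm, ← Matrix.dotProduct_mulVec]
  rw [Matrix.smul_mulVec, Matrix.add_mulVec, dotProduct_smul,
    dotProduct_add, ht]
  ring_nf

private lemma hasDerivAt_dot3 {f : ℝ → Fin 3 → ℝ} {f' : Fin 3 → ℝ} {t : ℝ}
    (hf : HasDerivAt f f' t) :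
    HasDerivAt (fun s => f s ⬝ᵥ f s) (2 * (f t ⬝ᵥ f')) t := by
  have h := hasDerivAt_pi.mp hf
  have h2 : HasDerivAt (fun s => ∑ i, f s i * f s i) (∑ i, (f' i * f t i + f t i * f' i)) t :=
    HasDerivAt.fun_sum (fun i _ => (h i).mul (h i))
  convert h2 using 1
  · rfl
  simp only [dotProduct, Finset.mul_sum]
  exact Finset.sum_congr rfl fun i _ => by ring

private lemma young3 (ε : ℝ) (hε : 0 < ε) (x y : Fin 3 → ℝ) :
    2 * ε ^ 2 * (x ⬝ᵥ y) ≤ ε ^ 3 * (x ⬝ᵥ x) + ε * (y ⬝ᵥ y) := by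
  simp only [dotProduct, Fin.sum_univ_three]
  nlinarith [mul_nonneg hε.le (sq_nonneg (ε * x 0 - y 0)),
    mul_nonneg hε.le (sq_nonneg (ε * x 1 - y 1)),
    mul_nonneg hε.le (sq_nonneg (ε * x 2 - y 2))]

theorem cascade_lyapunov (ω : ℝ → Fin 3 → ℝ) (hω : Continuous ω)
    (K L : Matrix (Fin 3) (Fin 3) ℝ)
    (hK : ((1 / 2 : ℝ) • (K + Kᵀ)).PosDef)
    (hL : ((1 / 2 : ℝ) • (L + Lᵀ)).PosDef)
    (σK σL : ℝ) (hσKpos : 0 < σK) (hσLpos : 0 < σL)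
    (hσK : IsLeast {μ : ℝ |
      Module.End.HasEigenvalue (Matrix.toLin' ((1 / 2 : ℝ) • (K + Kᵀ))) μ} σK)
    (hσL : IsLeast {μ : ℝ |
      Module.End.HasEigenvalue (Matrix.toLin' ((1 / 2 : ℝ) • (L + Lᵀ))) μ} σL)
    (ε : ℝ) (hε : 0 < ε) (hε' : ε < 2 * min σK σL)
    (ev eγ : ℝ → Fin 3 → ℝ)
    (hev : ∀ t, HasDerivAt ev (ev t ×₃ ω t + eγ t - K *ᵥ ev t) t)
    (heγ : ∀ t, HasDerivAt eγ (eγ t ×₃ ω t - L *ᵥ eγ t) t) :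
    (∃ d : ℝ → ℝ, ∀ t,
      HasDerivAt (fun s => eγ s ⬝ᵥ eγ s / 2 + ε ^ 2 / 2 * (ev s ⬝ᵥ ev s)) (d t) t ∧
      d t ≤ -(σL - ε / 2) * (eγ t ⬝ᵥ eγ t) - ε ^ 2 * (σK - ε / 2) * (ev t ⬝ᵥ ev t)) ∧
    ∃ c > 0, ∃ lam > 0, ∀ t₀ t, t₀ ≤ t →
      Real.sqrt (ev t ⬝ᵥ ev t + eγ t ⬝ᵥ eγ t) ≤
        c * Real.exp (-lam * (t - t₀)) * Real.sqrt (ev t₀ ⬝ᵥ ev t₀ + eγ t₀ ⬝ᵥ eγ t₀) := by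
  -- quadratic form bounds
  have hQK : ∀ x : Fin 3 → ℝ, σK * (x ⬝ᵥ x) ≤ x ⬝ᵥ (K *ᵥ x) := fun x => by
    have := quad_lower _ hK.1 σK (fun μ h => hσK.2 h) x
    rwa [sym_quad] at this
  have hQL : ∀ x : Fin 3 → ℝ, σL * (x ⬝ᵥ x) ≤ x ⬝ᵥ (L *ᵥ x) := fun x => by
    have := quad_lower _ hL.1 σL (fun μ h => hσL.2 h) x
    rwa [sym_quad] at this
  set γ' : ℝ → Fin 3 → ℝ := fun t => eγ t ×₃ ω t - L *ᵥ eγ t with hγ'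
  set v' : ℝ → Fin 3 → ℝ := fun t => ev t ×₃ ω t + eγ t - K *ᵥ ev t with hv'
  set d : ℝ → ℝ := fun t => eγ t ⬝ᵥ γ' t + ε ^ 2 * (ev t ⬝ᵥ v' t) with hd
  set V : ℝ → ℝ := fun s => eγ s ⬝ᵥ eγ s / 2 + ε ^ 2 / 2 * (ev s ⬝ᵥ ev s) with hV
  have hVd : ∀ t, HasDerivAt V (d t) t := by
    intro t
    have h1 := (hasDerivAt_dot3 (heγ t)).div_const 2
    have h2 := (hasDerivAt_dot3 (hev t)).const_mul (ε ^ 2 / 2)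
    have := h1.add h2
    refine this.congr_deriv ?_
    simp only [hd]
    ring
  have hdγ : ∀ t, eγ t ⬝ᵥ γ' t = -(eγ t ⬝ᵥ (L *ᵥ eγ t)) := by
    intro t
    simp only [hγ', dotProduct_sub, dot_self_cross, zero_sub]
  have hdv : ∀ t, ev t ⬝ᵥ v' t = ev t ⬝ᵥ eγ t - ev t ⬝ᵥ (K *ᵥ ev t) := by
    intro t
    simp only [hv', sub_eq_add_neg, dotProduct_add, dotProduct_neg,
      dot_self_cross, zero_add]
  have hbound : ∀ t, d t ≤ -(σL - ε / 2) * (eγ t ⬝ᵥ eγ t)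
      - ε ^ 2 * (σK - ε / 2) * (ev t ⬝ᵥ ev t) := by
    intro t
    have h1 := hQL (eγ t)
    have h2 : ε ^ 2 * (σK * (ev t ⬝ᵥ ev t)) ≤ ε ^ 2 * (ev t ⬝ᵥ (K *ᵥ ev t)) :=
      mul_le_mul_of_nonneg_left (hQK (ev t)) (sq_nonneg ε)
    have h3 := young3 ε hε (ev t) (eγ t)
    rw [hd]
    simp only
    rw [hdγ t, hdv t]
    nlinarith [h1, h2, h3]
  refine ⟨⟨d, fun t => ⟨hVd t, hbound t⟩⟩, ?_⟩
  -- exponential stability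
  set lam : ℝ := min σK σL - ε / 2 with hlam
  have hlampos : 0 < lam := by
    rcases min_choice σK σL with h | h <;> rw [hlam, h] <;>
      [skip; skip] <;> nlinarith [min_le_left σK σL, min_le_right σK σL]
  have hdV : ∀ t, d t ≤ -(2 * lam) * V t := by
    intro t
    have hb := hbound t
    have h1 : 0 ≤ (σL - ε / 2 - lam) * (eγ t ⬝ᵥ eγ t) :=
      mul_nonneg (by simp only [hlam]; linarith [min_le_right σK σL]) (dot_self_nonneg3 _)
    have h2 : 0 ≤ (σK - ε / 2 - lam) * (ε ^ 2 * (ev t ⬝ᵥ ev t)) :=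
      mul_nonneg (by simp only [hlam]; linarith [min_le_left σK σL])
        (mul_nonneg (sq_nonneg ε) (dot_self_nonneg3 _))
    simp only [hV]
    nlinarith [h1, h2, hb]
  set g : ℝ → ℝ := fun t => V t * Real.exp (2 * lam * t) with hg
  have hgd : ∀ t, HasDerivAt g ((d t + 2 * lam * V t) * Real.exp (2 * lam * t)) t := by
    intro t
    have he : HasDerivAt (fun s : ℝ => Real.exp (2 * lam * s))
        (Real.exp (2 * lam * t) * (2 * lam)) t := by
      simpa using ((hasDerivAt_id t).const_mul (2 * lam)).exp
    have := (hVd t).mul he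
    refine this.congr_deriv ?_
    ring
  have hmono : Antitone g := by
    apply antitone_of_deriv_nonpos (fun t => (hgd t).differentiableAt)
    intro t
    rw [(hgd t).deriv]
    have h1 : d t + 2 * lam * V t ≤ 0 := by linarith [hdV t]
    exact mul_nonpos_of_nonpos_of_nonneg h1 (Real.exp_nonneg _)
  -- norm equivalence constants
  set m : ℝ := min 1 (ε ^ 2) with hm
  set M : ℝ := max 1 (ε ^ 2) with hM
  have hmpos : 0 < m := lt_min one_pos (by positivity)
  have hMpos : 0 < M := lt_of_lt_of_le one_pos (le_max_left _ _)
  have hlow : ∀ s, m / 2 * (ev s ⬝ᵥ ev s + eγ s ⬝ᵥ eγ s) ≤ V s := by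
    intro s
    have h1 : m ≤ 1 := min_le_left _ _
    have h2 : m ≤ ε ^ 2 := min_le_right _ _
    have := dot_self_nonneg3 (ev s); have := dot_self_nonneg3 (eγ s)
    simp only [hV]; nlinarith
  have hup : ∀ s, V s ≤ M / 2 * (ev s ⬝ᵥ ev s + eγ s ⬝ᵥ eγ s) := by
    intro s
    have h1 : (1 : ℝ) ≤ M := le_max_left _ _
    have h2 : ε ^ 2 ≤ M := le_max_right _ _
    have := dot_self_nonneg3 (ev s); have := dot_self_nonneg3 (eγ s)
    simp only [hV]; nlinarith
  refine ⟨Real.sqrt (M / m), Real.sqrt_pos.mpr (by positivity), lam, hlampos, ?_⟩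
  intro t₀ t htt
  set X : ℝ := ev t ⬝ᵥ ev t + eγ t ⬝ᵥ eγ t with hX
  set X₀ : ℝ := ev t₀ ⬝ᵥ ev t₀ + eγ t₀ ⬝ᵥ eγ t₀ with hX₀
  have hXnn : 0 ≤ X := add_nonneg (dot_self_nonneg3 _) (dot_self_nonneg3 _)
  have hX₀nn : 0 ≤ X₀ := add_nonneg (dot_self_nonneg3 _) (dot_self_nonneg3 _)
  have hgle : g t ≤ g t₀ := hmono htt
  have hVle : V t ≤ V t₀ * Real.exp (-(2 * lam) * (t - t₀)) := by
    have h1 : V t ≤ V t₀ * Real.exp (2 * lam * t₀) / Real.exp (2 * lam * t) := by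
      rw [le_div_iff₀ (Real.exp_pos _)]
      exact hgle
    have h2 : V t₀ * Real.exp (2 * lam * t₀) / Real.exp (2 * lam * t)
        = V t₀ * Real.exp (-(2 * lam) * (t - t₀)) := by
      rw [mul_div_assoc, ← Real.exp_sub]
      ring_nf
    rwa [h2] at h1
  have hchain : X ≤ M / m * Real.exp (-(2 * lam) * (t - t₀)) * X₀ := by
    have s1 : m / 2 * X ≤ V t := hlow t
    have s2 : V t₀ * Real.exp (-(2 * lam) * (t - t₀))
        ≤ M / 2 * X₀ * Real.exp (-(2 * lam) * (t - t₀)) :=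
      mul_le_mul_of_nonneg_right (hup t₀) (Real.exp_nonneg _)
    have s3 : m / 2 * X ≤ M / 2 * X₀ * Real.exp (-(2 * lam) * (t - t₀)) :=
      s1.trans (hVle.trans s2)
    have s4 := mul_le_mul_of_nonneg_left s3 (le_of_lt (by positivity : (0:ℝ) < 2 / m))
    calc X = 2 / m * (m / 2 * X) := by field_simp
      _ ≤ 2 / m * (M / 2 * X₀ * Real.exp (-(2 * lam) * (t - t₀))) := s4
      _ = M / m * Real.exp (-(2 * lam) * (t - t₀)) * X₀ := by field_simp
  have hsq : M / m * Real.exp (-(2 * lam) * (t - t₀)) * X₀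
      = (Real.sqrt (M / m) * Real.exp (-lam * (t - t₀)) * Real.sqrt X₀) ^ 2 := by
    rw [mul_pow, mul_pow, Real.sq_sqrt (by positivity : (0:ℝ) ≤ M / m), Real.sq_sqrt hX₀nn]
    rw [← Real.exp_nat_mul]
    ring_nf
  have hfinal : X ≤ (Real.sqrt (M / m) * Real.exp (-lam * (t - t₀)) * Real.sqrt X₀) ^ 2 := by
    rw [← hsq]; exact hchain
  calc Real.sqrt X ≤ Real.sqrt ((Real.sqrt (M / m) * Real.exp (-lam * (t - t₀))
        * Real.sqrt X₀) ^ 2) := Real.sqrt_le_sqrt hfinal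
    _ = Real.sqrt (M / m) * Real.exp (-lam * (t - t₀)) * Real.sqrt X₀ :=
      Real.sqrt_sq (by positivity)
end

section
/- Let ω, a, v_m, β_m : ℝ → ℝ³ with v_m = v, β_m = β for the true states, and let (v, γ, β) solve v̇ = v × ω + γ + a, γ̇ = γ × ω, β̇ = β × ω. Let (v̂, γ̂, β̂) solve the observer equations v̂̇ = v̂ × ω + a + γ̂ − (L+K)(v̂ − v), γ̂̇ = γ̂ × ω − (L S(ω) − S(ω) L + L K)(v̂ − v), β̂̇ = β̂ × ω − M(β̂ − β), where K, L, M are constant 3×3 matrices. Then the error variables e_v := v̂ − v, e_γ := γ̂ − γ − L e_v, e_β := β̂ − β satisfy ė_v = e_v × ω + e_γ − K e_v, ė_γ = e_γ × ω − L e_γ, ė_β = e_β × ω − M e_β. -/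
open Matrix
open scoped Matrix

/-- The hat map: the skew-symmetric matrix `S ω` with `S ω *ᵥ x = ω ⨯₃ x`. -/
def hatMap (ω : Fin 3 → ℝ) : Matrix (Fin 3) (Fin 3) ℝ :=
  !![0, -ω 2, ω 1; ω 2, 0, -ω 0; -ω 1, ω 0, 0]

lemma hasDerivAt_mulVec (A : Matrix (Fin 3) (Fin 3) ℝ) {f : ℝ → Fin 3 → ℝ}
    {f' : Fin 3 → ℝ} {t : ℝ} (hf : HasDerivAt f f' t) :
    HasDerivAt (fun s => A *ᵥ f s) (A *ᵥ f') t := by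
  have h := (A.mulVecLin.toContinuousLinearMap.hasFDerivAt (x := f t)).comp_hasDerivAt t hf
  simp at h
  exact h

set_option maxHeartbeats 1000000 in
theorem observer_error_dynamics
    (ω a v γ β vh γh βh : ℝ → Fin 3 → ℝ)
    (K L M : Matrix (Fin 3) (Fin 3) ℝ)
    (hv : ∀ t, HasDerivAt v (v t ⨯₃ ω t + γ t + a t) t)
    (hγ : ∀ t, HasDerivAt γ (γ t ⨯₃ ω t) t)
    (hβ : ∀ t, HasDerivAt β (β t ⨯₃ ω t) t)
    (hvh : ∀ t, HasDerivAt vh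
      (vh t ⨯₃ ω t + a t + γh t - (L + K) *ᵥ (vh t - v t)) t)
    (hγh : ∀ t, HasDerivAt γh
      (γh t ⨯₃ ω t - (L * hatMap (ω t) - hatMap (ω t) * L + L * K) *ᵥ (vh t - v t)) t)
    (hβh : ∀ t, HasDerivAt βh (βh t ⨯₃ ω t - M *ᵥ (βh t - β t)) t)
    (ev eγ eβ : ℝ → Fin 3 → ℝ)
    (hev : ev = fun t => vh t - v t)
    (heγ : eγ = fun t => γh t - γ t - L *ᵥ ev t)
    (heβ : eβ = fun t => βh t - β t) :
    (∀ t, HasDerivAt ev (ev t ⨯₃ ω t + eγ t - K *ᵥ ev t) t) ∧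
    (∀ t, HasDerivAt eγ (eγ t ⨯₃ ω t - L *ᵥ eγ t) t) ∧
    (∀ t, HasDerivAt eβ (eβ t ⨯₃ ω t - M *ᵥ eβ t) t) := by
  subst hev heγ heβ
  refine ⟨fun t => ?_, fun t => ?_, fun t => ?_⟩
  · have h := (hvh t).sub (hv t)
    refine h.congr_deriv ?_
    funext i
    fin_cases i <;>
      simp [crossProduct, Matrix.mulVec, dotProduct, Fin.sum_univ_three, Matrix.vecHead, Matrix.vecTail, Pi.sub_apply,
        Matrix.add_apply] <;> ring
  · have h := ((hγh t).sub (hγ t)).sub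
      (hasDerivAt_mulVec L ((hvh t).sub (hv t)))
    refine h.congr_deriv ?_
    funext i
    fin_cases i <;>
      simp [crossProduct, hatMap, Matrix.mulVec, dotProduct, Fin.sum_univ_three, Matrix.vecHead, Matrix.vecTail, Pi.sub_apply,
        Matrix.add_apply, Matrix.sub_apply, Matrix.mul_apply, Matrix.vecMul] <;> ring
  · have h := (hβh t).sub (hβ t)
    refine h.congr_deriv ?_
    funext i
    fin_cases i <;>
      simp [crossProduct, Matrix.mulVec, dotProduct, Fin.sum_univ_three, Matrix.vecHead, Matrix.vecTail, Pi.sub_apply] <;> ring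
end
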